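/- Let A ⊆ B be finitely generated integral domains over a field k of characteristic zero, with B integral over A, and let F be a family of k-derivations on B each of which maps A into A. If A is integrally closed in its fraction field, then B^F = ∩_{d∈F} ker(d|_B) is integral over A^F = ∩_{d∈F} ker(d|_A). -/

import Mathlib

/-- The kernel of a derivation, as a subalgebra. -/
def Derivation.kerSubalgebra {k B : Type*} [CommRing k] [CommRing B] [Algebra k B]
    (d : Derivation k B B) : Subalgebra k B where
  carrier := {x | d x = 0}
  mul_mem' := by
    intro a b ha hb
    simp only [Set.mem_setOf_eq] at *
    simp [d.leibniz, ha, hb]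
  add_mem' := by
    intro a b ha hb
    simp only [Set.mem_setOf_eq] at *
    simp [ha, hb]
  algebraMap_mem' := by
    intro r
    simp [Derivation.map_algebraMap]

/-- Let `A ⊆ B` be finitely generated integral domains over a field `k` of
characteristic zero, `B` integral over `A`, and `F` a family of `k`-derivations
of `B` preserving `A`.  If `A` is integrally closed in its fraction field, then
`B^F` is integral over `A^F`. -/
theorem fixed_ring_integral_of_normal
    (k B : Type*) [Field k] [CharZero k] [CommRing B] [IsDomain B] [Algebra k B]
    [Algebra.FiniteType k B]
    (A : Subalgebra k B) [Algebra.FiniteType k ↥A]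
    (hint : ∀ b : B, IsIntegral (↥A) b)
    [IsIntegrallyClosed ↥A]
    (F : Set (Derivation k B B))
    (hF : ∀ d ∈ F, ∀ a ∈ A, d a ∈ A)
    (x : B) (hx : ∀ d ∈ F, d x = 0) :
    IsIntegral (↥(A ⊓ ⨅ d ∈ F, Derivation.kerSubalgebra d)) x := by
  have hinj : Function.Injective (algebraMap ↥A B) := Subtype.val_injective
  have : NoZeroSMulDivisors ↥A B := ⟨fun {c y} h => by
    rw [Algebra.smul_def, mul_eq_zero] at h
    exact h.imp_left (fun h' => hinj (h'.trans (map_zero _).symm))⟩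
  set p := minpoly ↥A x with hp
  have hxi : IsIntegral ↥A x := hint x
  have hmonic : p.Monic := minpoly.monic hxi
  set n := p.natDegree with hn
  -- the evaluation of p at x as a sum
  have heval : (Finset.range (n + 1)).sum (fun i => (p.coeff i : B) * x ^ i) = 0 := by
    have := minpoly.aeval ↥A x
    rw [Polynomial.aeval_eq_sum_range (p := p) x] at this
    simpa [Algebra.smul_def] using this
  -- Key: every derivation in F kills every coefficient of p
  have key : ∀ d ∈ F, ∀ i : ℕ, d (p.coeff i : B) = 0 := by
    intro d hd
    -- the derived polynomial
    set q : Polynomial ↥A :=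
      (Finset.range (n + 1)).sum
        (fun i => Polynomial.C (⟨d (p.coeff i : B), hF d hd _ (p.coeff i).2⟩ : ↥A)
          * Polynomial.X ^ i) with hq
    have hqcoeff : ∀ j, q.coeff j =
        if j < n + 1 then (⟨d (p.coeff j : B), hF d hd _ (p.coeff j).2⟩ : ↥A) else 0 := by
      intro j
      rw [hq, Polynomial.finset_sum_coeff]
      simp only [Polynomial.coeff_C_mul, Polynomial.coeff_X_pow, mul_ite, mul_one, mul_zero]
      rw [Finset.sum_ite_eq (Finset.range (n + 1)) j]
      simp [Finset.mem_range]
    -- q(x) = 0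
    have hqeval : Polynomial.aeval x q = 0 := by
      have hderiv : d ((Finset.range (n + 1)).sum (fun i => (p.coeff i : B) * x ^ i)) = 0 := by
        rw [heval]; exact d.map_zero
      rw [map_sum] at hderiv
      have hterm : ∀ i ∈ Finset.range (n + 1),
          d ((p.coeff i : B) * x ^ i) = d (p.coeff i : B) * x ^ i := by
        intro i _
        rw [d.leibniz, Derivation.leibniz_pow, hx d hd]
        simp [smul_eq_mul, mul_comm]
      rw [Finset.sum_congr rfl hterm] at hderiv
      rw [hq, map_sum]
      have hterm2 : ∀ i ∈ Finset.range (n + 1),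
          Polynomial.aeval x (Polynomial.C (⟨d (p.coeff i : B), hF d hd _ (p.coeff i).2⟩ : ↥A)
            * Polynomial.X ^ i) = d (p.coeff i : B) * x ^ i := by
        intro i _
        rw [map_mul, Polynomial.aeval_C, map_pow, Polynomial.aeval_X]
        rfl
      rw [Finset.sum_congr rfl hterm2]
      exact hderiv
    -- p divides q
    have hdvd : p ∣ q := minpoly.isIntegrallyClosed_dvd hxi hqeval
    -- degree q < degree p
    have hdlt : q.degree < p.degree := by
      rw [Polynomial.degree_eq_natDegree hmonic.ne_zero]
      rw [Polynomial.degree_lt_iff_coeff_zero]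
      intro m hm
      rw [hqcoeff m]
      have hm' : n ≤ m := by exact_mod_cast hm
      by_cases h : m < n + 1
      · have hmn : m = n := by omega
        have h1 : (p.coeff m : B) = 1 := by
          rw [hmn, hn]
          exact_mod_cast congrArg Subtype.val hmonic.coeff_natDegree
        rw [if_pos h]
        ext
        simp [h1]
      · simp [h]
    have hq0 : q = 0 := Polynomial.eq_zero_of_dvd_of_degree_lt hdvd hdlt
    intro i
    by_cases h : i < n + 1
    · have := congrArg (fun r => Polynomial.coeff r i) hq0
      simp only [Polynomial.coeff_zero] at this
      rw [hqcoeff i, if_pos h] at this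
      simpa using congrArg Subtype.val this
    · have : p.coeff i = 0 := by
        apply Polynomial.coeff_eq_zero_of_natDegree_lt
        omega
      rw [this]
      simp
  -- now build the witness polynomial over the fixed subalgebra
  set A' := A ⊓ ⨅ d ∈ F, Derivation.kerSubalgebra d with hA'
  have hmem : ∀ i : ℕ, (p.coeff i : B) ∈ A' := by
    intro i
    rw [hA', Algebra.mem_inf]
    refine ⟨(p.coeff i).2, ?_⟩
    rw [Algebra.mem_iInf]
    intro d
    rw [Algebra.mem_iInf]
    intro hd
    exact key d hd i
  set r : Polynomial ↥A' :=
    (Finset.range (n + 1)).sum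
      (fun i => Polynomial.C (⟨(p.coeff i : B), hmem i⟩ : ↥A') * Polynomial.X ^ i) with hr
  have hrcoeff : ∀ j, r.coeff j =
      if j < n + 1 then (⟨(p.coeff j : B), hmem j⟩ : ↥A') else 0 := by
    intro j
    rw [hr, Polynomial.finset_sum_coeff]
    simp only [Polynomial.coeff_C_mul, Polynomial.coeff_X_pow, mul_ite, mul_one, mul_zero]
    rw [Finset.sum_ite_eq (Finset.range (n + 1)) j]
    simp [Finset.mem_range]
  refine ⟨r, ?_, ?_⟩
  · apply Polynomial.monic_of_natDegree_le_of_coeff_eq_one n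
    · apply Polynomial.natDegree_sum_le_of_forall_le
      intro i hi
      refine le_trans (Polynomial.natDegree_C_mul_le _ _) ?_
      simp only [Polynomial.natDegree_X_pow]
      exact Nat.lt_succ_iff.mp (Finset.mem_range.mp hi)
    · rw [hrcoeff n, if_pos (Nat.lt_succ_self n)]
      have h1 : (p.coeff n : B) = 1 := by
        rw [hn]
        exact_mod_cast congrArg Subtype.val hmonic.coeff_natDegree
      ext
      simp [h1]
  · show Polynomial.eval₂ _ _ _ = 0
    rw [hr]
    simp only [Polynomial.eval₂_finset_sum, Polynomial.eval₂_mul, Polynomial.eval₂_C,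
      Polynomial.eval₂_X_pow]
    exact heval
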